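/- arXiv:1406.4025 — 2 statements merged into one kernel-verified Lean document; each statement's English description precedes it below -/
import Mathlib

section
/- Let H = -d²/du² + u² be the harmonic oscillator on L²(ℝ). For every f in the domain of H, ‖u²f‖_{L²(ℝ)} ≤ √5 · ‖Hf‖_{L²(ℝ)}. -/
open MeasureTheory
set_option maxHeartbeats 1000000

private lemma ho_aux_int {E : Type*} [NormedAddCommGroup E] (φ ψ : SchwartzMap ℝ ℂ) (k : ℕ)
    (C : ℝ) (hC : 0 ≤ C) {F : ℝ → E} (hF : AEStronglyMeasurable F volume)
    (hb : ∀ x : ℝ, ‖F x‖ ≤ C * (|x| ^ k * (‖φ x‖ * ‖ψ x‖))) : Integrable F volume := by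
  have hψ := SchwartzMap.norm_le_seminorm ℝ ψ
  have hint := φ.integrable_pow_mul volume k
  refine ((hint.const_mul (SchwartzMap.seminorm ℝ 0 0 ψ)).const_mul C).mono' hF
    (ae_of_all _ fun x => ?_)
  have h2 : ‖ψ x‖ ≤ SchwartzMap.seminorm ℝ 0 0 ψ := hψ x
  have h3 : (0:ℝ) ≤ |x| ^ k * ‖φ x‖ := by positivity
  calc ‖F x‖ ≤ C * (|x| ^ k * (‖φ x‖ * ‖ψ x‖)) := hb x
    _ = C * ((|x| ^ k * ‖φ x‖) * ‖ψ x‖) := by ring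
    _ ≤ C * ((|x| ^ k * ‖φ x‖) * SchwartzMap.seminorm ℝ 0 0 ψ) := by
        exact mul_le_mul_of_nonneg_left (mul_le_mul_of_nonneg_left h2 h3) hC
    _ = C * (SchwartzMap.seminorm ℝ 0 0 ψ * (‖x‖ ^ k * ‖φ x‖)) := by
        rw [Real.norm_eq_abs]; ring

private lemma ho_int_re {F : ℝ → ℂ} (hF : MeasureTheory.Integrable F MeasureTheory.volume) :
    (∫ x, F x).re = ∫ x, (F x).re := (integral_re hF).symm

private lemma ho_re1 (z : ℂ) : (star z * z).re = ‖z‖^2 := by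
  simp only [Complex.sq_norm, Complex.normSq_apply, Complex.mul_re,
    Complex.star_def, Complex.conj_re, Complex.conj_im]
  ring

private lemma ho_re2 (a b : ℂ) : ‖-a + b‖^2 = ‖a‖^2 + ‖b‖^2 - 2*(star a * b).re := by
  simp only [Complex.sq_norm, Complex.normSq_apply, Complex.mul_re,
    Complex.add_re, Complex.add_im, Complex.neg_re, Complex.neg_im, Complex.star_def,
    Complex.conj_re, Complex.conj_im]
  ring

private lemma ho_re3 (x : ℝ) (w : ℂ) : ((x:ℂ) * (w + star w)).re = x * (2 * w.re) := by
  simp only [Complex.mul_re, Complex.add_re, Complex.add_im, Complex.star_def,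
    Complex.conj_re, Complex.conj_im, Complex.ofReal_re, Complex.ofReal_im]
  ring

private lemma ho_re4 (x : ℝ) (z w : ℂ) : (star w * ((x:ℂ)^2 * z)).re
    = x^2 * (star w * z).re := by
  have : ((x:ℂ)^2) = ((x^2 : ℝ) : ℂ) := by push_cast; ring
  rw [this]
  simp only [Complex.mul_re, Complex.mul_im, Complex.star_def, Complex.conj_re, Complex.conj_im,
    Complex.ofReal_re, Complex.ofReal_im]
  ring

private lemma ho_re6 (x : ℝ) (z w : ℂ) : ((2*(x:ℂ)*z) * star w).re
    = x * (2 * (star w * z).re) := by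
  simp only [Complex.mul_re, Complex.mul_im, Complex.star_def, Complex.conj_re, Complex.conj_im,
    Complex.ofReal_re, Complex.ofReal_im, Complex.re_ofNat, Complex.im_ofNat]
  ring

private lemma ho_re5 (a b : ℂ) : (star a * b).re ≤ ‖a‖ * ‖b‖ := by
  calc (star a * b).re ≤ ‖star a * b‖ := Complex.re_le_norm _
    _ = ‖a‖ * ‖b‖ := by rw [norm_mul, norm_star]

/-- For the harmonic oscillator `H = -d²/du² + u²` on `L²(ℝ)` and `f` Schwartz (a core of
the domain of `H`), `‖u² f‖₂ ≤ √5 ‖H f‖₂`. -/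
theorem stmt0 (f : SchwartzMap ℝ ℂ) :
    eLpNorm (fun u : ℝ => (u : ℂ) ^ 2 * f u) 2 volume ≤
      ENNReal.ofReal (Real.sqrt 5) *
        eLpNorm (fun u : ℝ =>
          -(deriv (deriv (fun v : ℝ => f v)) u) + (u : ℂ) ^ 2 * f u) 2 volume := by
  set g := SchwartzMap.derivCLM ℝ ℂ f with hgdef
  set h := SchwartzMap.derivCLM ℝ ℂ g with hhdef
  have hg : ∀ x, HasDerivAt f (g x) x := fun x => by
    simpa [hgdef, SchwartzMap.derivCLM_apply] using
      (f.differentiable.differentiableAt (x := x)).hasDerivAt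
  have hh : ∀ x, HasDerivAt g (h x) x := fun x => by
    simpa [hhdef, SchwartzMap.derivCLM_apply] using
      (g.differentiable.differentiableAt (x := x)).hasDerivAt
  have hd2 : deriv (deriv (fun v : ℝ => f v)) = fun u => h u := by
    have h1 : deriv (fun v : ℝ => f v) = ⇑g := by
      funext x; simp [hgdef, SchwartzMap.derivCLM_apply]
    rw [h1]; funext u; simp [hhdef, SchwartzMap.derivCLM_apply]
  set q : ℝ → ℂ := fun x => (x:ℂ)^2 * f x with hqdef
  set k : ℝ → ℂ := fun x => -(h x) + q x with hkdef
  have hgoal : (fun u : ℝ =>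
      -(deriv (deriv (fun v : ℝ => f v)) u) + (u : ℂ) ^ 2 * f u) = k := by
    funext u; rw [hd2]
  rw [hgoal]
  -- continuity
  have cf : Continuous f := f.continuous
  have cg : Continuous g := g.continuous
  have ch : Continuous h := h.continuous
  have cq : Continuous q := (Complex.continuous_ofReal.pow 2).mul cf
  have ck : Continuous k := (ch.neg).add cq
  -- derivatives
  have hid : ∀ x : ℝ, HasDerivAt (fun y : ℝ => (y:ℂ)) 1 x := fun x => by
    simpa using (hasDerivAt_id x).ofReal_comp
  have hx2 : ∀ x : ℝ, HasDerivAt (fun y : ℝ => ((y:ℂ))^2) (2*(x:ℂ)) x := fun x => by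
    simpa using (hasDerivAt_pow 2 (x:ℂ)).comp_ofReal
  have hq' : ∀ x : ℝ, HasDerivAt q (2*(x:ℂ)*f x + (x:ℂ)^2 * g x) x := fun x =>
    (hx2 x).mul (hg x)
  -- complex integrabilities
  have I_fh : Integrable (fun x => star (f x) * h x) volume := by
    refine ho_aux_int f h 0 1 zero_le_one
      ((continuous_star.comp cf).mul ch).aestronglyMeasurable (fun x => ?_)
    simp [norm_mul]
  have I_gg : Integrable (fun x => star (g x) * g x) volume := by
    refine ho_aux_int g g 0 1 zero_le_one
      ((continuous_star.comp cg).mul cg).aestronglyMeasurable (fun x => ?_)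
    simp [norm_mul]
  have I_fg : Integrable (fun x => star (f x) * g x) volume := by
    refine ho_aux_int f g 0 1 zero_le_one
      ((continuous_star.comp cf).mul cg).aestronglyMeasurable (fun x => ?_)
    simp [norm_mul]
  have I_ff : Integrable (fun x => star (f x) * f x) volume := by
    refine ho_aux_int f f 0 1 zero_le_one
      ((continuous_star.comp cf).mul cf).aestronglyMeasurable (fun x => ?_)
    simp [norm_mul]
  have I_xv3 : Integrable (fun x : ℝ => (x:ℂ) * (star (g x) * f x + star (f x) * g x))
      volume := by
    refine ho_aux_int f g 1 2 (by norm_num)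
      (Complex.continuous_ofReal.mul (((continuous_star.comp cg).mul cf).add
        ((continuous_star.comp cf).mul cg))).aestronglyMeasurable (fun x => ?_)
    rw [norm_mul]
    refine le_trans (mul_le_mul_of_nonneg_left (norm_add_le _ _) (norm_nonneg _))
      (le_of_eq ?_)
    simp [norm_mul, Complex.norm_real, Real.norm_eq_abs]
    ring
  have I_xff : Integrable (fun x : ℝ => (x:ℂ) * (star (f x) * f x)) volume := by
    refine ho_aux_int f f 1 1 zero_le_one
      (Complex.continuous_ofReal.mul ((continuous_star.comp cf).mul cf)).aestronglyMeasurable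
      (fun x => ?_)
    simp [norm_mul, Complex.norm_real, Real.norm_eq_abs]
    try ring_nf
  have I_qsh : Integrable (fun x : ℝ => ((x:ℂ)^2 * f x) * star (h x)) volume := by
    refine ho_aux_int f h 2 1 zero_le_one
      ((cq.mul (continuous_star.comp ch))).aestronglyMeasurable (fun x => ?_)
    simp [norm_mul, Complex.norm_real, Real.norm_eq_abs]
    try ring_nf
    exact le_refl _
  have I_a : Integrable (fun x : ℝ => (2*(x:ℂ)*f x) * star (g x)) volume := by
    refine ho_aux_int f g 1 2 (by norm_num)
      (((continuous_const.mul Complex.continuous_ofReal).mul cf).mul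
        (continuous_star.comp cg)).aestronglyMeasurable (fun x => ?_)
    simp [norm_mul, Complex.norm_real, Real.norm_eq_abs]
    try ring_nf
    exact le_refl _
  have I_b : Integrable (fun x : ℝ => ((x:ℂ)^2*g x) * star (g x)) volume := by
    refine ho_aux_int g g 2 1 zero_le_one
      (((Complex.continuous_ofReal.pow 2).mul cg).mul
        (continuous_star.comp cg)).aestronglyMeasurable (fun x => ?_)
    simp [norm_mul, Complex.norm_real, Real.norm_eq_abs]
    try ring_nf
    exact le_refl _
  have I_ab : Integrable (fun x : ℝ => (2*(x:ℂ)*f x + (x:ℂ)^2*g x) * star (g x)) volume :=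
    (I_a.add I_b).congr (ae_of_all _ fun x => by simp only [Pi.add_apply]; ring)
  have I_qsg : Integrable (fun x : ℝ => ((x:ℂ)^2 * f x) * star (g x)) volume := by
    refine ho_aux_int f g 2 1 zero_le_one
      ((cq.mul (continuous_star.comp cg))).aestronglyMeasurable (fun x => ?_)
    simp [norm_mul, Complex.norm_real, Real.norm_eq_abs]
    try ring_nf
    exact le_refl _
  have I_shq : Integrable (fun x : ℝ => star (h x) * q x) volume := by
    refine ho_aux_int h f 2 1 zero_le_one
      ((continuous_star.comp ch).mul cq).aestronglyMeasurable (fun x => ?_)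
    simp [hqdef, norm_mul, Complex.norm_real, Real.norm_eq_abs]
    try ring_nf
    exact le_refl _
  have I_fq : Integrable (fun x : ℝ => star (f x) * q x) volume := by
    refine ho_aux_int f f 2 1 zero_le_one
      ((continuous_star.comp cf).mul cq).aestronglyMeasurable (fun x => ?_)
    simp [hqdef, norm_mul, Complex.norm_real, Real.norm_eq_abs]
    try ring_nf
    exact le_refl _
  have I_fk : Integrable (fun x : ℝ => star (f x) * k x) volume :=
    ((I_fh.neg).add I_fq).congr (ae_of_all _ fun x => by simp [hkdef]; ring)
  -- real integrabilities
  have J_f2 : Integrable (fun x : ℝ => ‖f x‖^2) volume := by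
    refine ho_aux_int f f 0 1 zero_le_one ((cf.norm.pow 2)).aestronglyMeasurable (fun x => ?_)
    rw [Real.norm_eq_abs, abs_of_nonneg (by positivity)]
    simp [pow_two]
  have J_g2 : Integrable (fun x : ℝ => ‖g x‖^2) volume := by
    refine ho_aux_int g g 0 1 zero_le_one ((cg.norm.pow 2)).aestronglyMeasurable (fun x => ?_)
    rw [Real.norm_eq_abs, abs_of_nonneg (by positivity)]
    simp [pow_two]
  have J_h2 : Integrable (fun x : ℝ => ‖h x‖^2) volume := by
    refine ho_aux_int h h 0 1 zero_le_one ((ch.norm.pow 2)).aestronglyMeasurable (fun x => ?_)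
    rw [Real.norm_eq_abs, abs_of_nonneg (by positivity)]
    simp [pow_two]
  have J_xf2 : Integrable (fun x : ℝ => x^2 * ‖f x‖^2) volume := by
    refine ho_aux_int f f 2 1 zero_le_one
      ((continuous_pow 2).mul (cf.norm.pow 2)).aestronglyMeasurable (fun x => ?_)
    rw [Real.norm_eq_abs, abs_of_nonneg (by positivity)]
    refine le_of_eq ?_
    rw [← sq_abs x]; ring
  have J_q2 : Integrable (fun x : ℝ => ‖q x‖^2) volume := by
    refine ho_aux_int f f 4 1 zero_le_one ((cq.norm.pow 2)).aestronglyMeasurable (fun x => ?_)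
    rw [Real.norm_eq_abs, abs_of_nonneg (by positivity)]
    have hx : ‖q x‖ = |x|^2 * ‖f x‖ := by
      simp [hqdef, norm_mul, Complex.norm_real, Real.norm_eq_abs]
    rw [hx]
    refine le_of_eq ?_
    ring
  have hk2 : ∀ x, ‖k x‖^2 = ‖h x‖^2 + ‖q x‖^2 - 2*(star (h x) * q x).re := fun x =>
    ho_re2 (h x) (q x)
  have I_shq_re : Integrable (fun x : ℝ => (star (h x) * q x).re) volume := by
    simpa using I_shq.re
  have J_k2 : Integrable (fun x : ℝ => ‖k x‖^2) volume := by
    refine (((J_h2.add J_q2).sub (I_shq_re.const_mul 2)).congr (ae_of_all _ fun x => ?_))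
    simp only [Pi.add_apply, Pi.sub_apply]
    rw [hk2 x]; try ring
  have J_xg2 : Integrable (fun x : ℝ => x^2 * ‖g x‖^2) volume := by
    refine ho_aux_int g g 2 1 zero_le_one
      ((continuous_pow 2).mul (cg.norm.pow 2)).aestronglyMeasurable (fun x => ?_)
    rw [Real.norm_eq_abs, abs_of_nonneg (by positivity)]
    refine le_of_eq ?_
    rw [← sq_abs x]; ring
  -- integration by parts
  have E1 : ∫ x : ℝ, star (f x) * h x = - ∫ x : ℝ, star (g x) * g x :=
    MeasureTheory.integral_mul_deriv_eq_deriv_mul_of_integrable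
      (u := fun x => star (f x)) (u' := fun x => star (g x)) (v := ⇑g) (v' := ⇑h)
      (fun x _ => (hg x).star) (fun x _ => hh x) I_fh I_gg I_fg
  have E2 : ∫ x : ℝ, q x * star (h x)
      = - ∫ x : ℝ, (2*(x:ℂ)*f x + (x:ℂ)^2*g x) * star (g x) :=
    MeasureTheory.integral_mul_deriv_eq_deriv_mul_of_integrable
      (u := q) (u' := fun x => 2*(x:ℂ)*f x + (x:ℂ)^2*g x)
      (v := fun x => star (g x)) (v' := fun x => star (h x))
      (fun x _ => hq' x) (fun x _ => (hh x).star) I_qsh I_ab I_qsg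
  have I_1ff : Integrable (fun x : ℝ => (1:ℂ) * (star (f x) * f x)) volume :=
    I_ff.congr (ae_of_all _ fun x => (one_mul _).symm)
  have E3 : ∫ x : ℝ, (x:ℂ) * (star (g x) * f x + star (f x) * g x)
      = - ∫ x : ℝ, star (f x) * f x := by
    have := MeasureTheory.integral_mul_deriv_eq_deriv_mul_of_integrable
      (u := fun y : ℝ => (y:ℂ)) (u' := fun _ => (1:ℂ))
      (v := fun x => star (f x) * f x)
      (v' := fun x => star (g x) * f x + star (f x) * g x)
      (fun x _ => hid x) (fun x _ => ((hg x).star).mul (hg x)) I_xv3 I_1ff I_xff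
    rw [this]
    simp
  -- real quantities
  set N0 : ℝ := ∫ x : ℝ, ‖f x‖^2 with hN0
  set N1 : ℝ := ∫ x : ℝ, ‖g x‖^2 with hN1
  set P2 : ℝ := ∫ x : ℝ, x^2 * ‖f x‖^2 with hP2
  set Q2 : ℝ := ∫ x : ℝ, ‖q x‖^2 with hQ2
  set K2 : ℝ := ∫ x : ℝ, ‖k x‖^2 with hK2
  set G2 : ℝ := ∫ x : ℝ, x^2 * ‖g x‖^2 with hG2
  set H2 : ℝ := ∫ x : ℝ, ‖h x‖^2 with hH2
  have e_ff : (∫ x : ℝ, star (f x) * f x).re = N0 := by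
    rw [ho_int_re I_ff]
    exact integral_congr_ae (ae_of_all _ fun x => by
      simp only [ho_re1])
  have e_gg : (∫ x : ℝ, star (g x) * g x).re = N1 := by
    rw [ho_int_re I_gg]
    exact integral_congr_ae (ae_of_all _ fun x => by
      simp only [ho_re1])
  -- pointwise re identity for E3's integrand
  have h1 : ∀ x : ℝ, ((x:ℂ) * (star (g x) * f x + star (f x) * g x)).re
      = x * (2 * (star (g x) * f x).re) := by
    intro x
    have hst : star (f x) * g x = star (star (g x) * f x) := by
      rw [star_mul, star_star]
    rw [hst, ho_re3]
  have J_xr : Integrable (fun x : ℝ => x * (2 * (star (g x) * f x).re)) volume := by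
    have h' : Integrable
        (fun x : ℝ => ((x:ℂ) * (star (g x) * f x + star (f x) * g x)).re) volume := by
      simpa using I_xv3.re
    exact h'.congr (ae_of_all _ fun x => h1 x)
  have A1 : ∫ x : ℝ, x * (2 * (star (g x) * f x).re) = -N0 := by
    have s1 : ∫ x : ℝ, x * (2 * (star (g x) * f x).re)
        = (∫ x : ℝ, (x:ℂ) * (star (g x) * f x + star (f x) * g x)).re := by
      rw [ho_int_re I_xv3]
      exact integral_congr_ae (ae_of_all _ fun x => by
        exact (h1 x).symm)
    rw [s1, E3, Complex.neg_re, e_ff]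
  -- R1 : N0 ≤ N1 + P2
  have hpt1 : ∀ x : ℝ, -(x * (2 * (star (g x) * f x).re)) ≤ ‖g x‖^2 + x^2 * ‖f x‖^2 := by
    intro x
    have habs : |(star (g x) * f x).re| ≤ ‖g x‖ * ‖f x‖ := by
      calc |(star (g x) * f x).re| ≤ ‖star (g x) * f x‖ :=
            Complex.abs_re_le_norm _
        _ = ‖g x‖ * ‖f x‖ := by
            rw [norm_mul, norm_star]
    have h2 : |x * (star (g x) * f x).re| ≤ |x| * (‖g x‖ * ‖f x‖) := by
      rw [abs_mul]
      exact mul_le_mul_of_nonneg_left habs (abs_nonneg x)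
    have h3 : -(x * (2 * (star (g x) * f x).re)) ≤ 2 * (|x| * (‖g x‖ * ‖f x‖)) := by
      nlinarith [neg_abs_le (x * (star (g x) * f x).re)]
    refine h3.trans ?_
    nlinarith [sq_nonneg (‖g x‖ - |x| * ‖f x‖), sq_abs x, norm_nonneg (f x), norm_nonneg (g x)]
  have R1 : N0 ≤ N1 + P2 := by
    have e0 : N0 = ∫ x : ℝ, -(x * (2 * (star (g x) * f x).re)) := by
      rw [integral_neg, A1, neg_neg]
    have e1 : N1 + P2 = ∫ x : ℝ, (‖g x‖^2 + x^2 * ‖f x‖^2) :=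
      (integral_add J_g2 J_xf2).symm
    rw [e0, e1]
    exact integral_mono J_xr.neg (J_g2.add J_xf2) hpt1
  -- R2 : N0 ≤ K2
  have e_fq : (∫ x : ℝ, star (f x) * q x).re = P2 := by
    rw [ho_int_re I_fq]
    refine integral_congr_ae (ae_of_all _ fun x => ?_)
    simp only [hqdef]
    rw [ho_re4, ho_re1]
  have hfk_re : (∫ x : ℝ, star (f x) * k x).re = N1 + P2 := by
    have I_nfh : Integrable (fun x : ℝ => -(star (f x) * h x)) volume := I_fh.neg
    have split : ∫ x : ℝ, star (f x) * k x
        = -(∫ x : ℝ, star (f x) * h x) + ∫ x : ℝ, star (f x) * q x := by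
      have c1 : ∫ x : ℝ, star (f x) * k x
          = ∫ x : ℝ, (-(star (f x) * h x) + star (f x) * q x) :=
        integral_congr_ae (ae_of_all _ fun x => by simp [hkdef]; ring)
      rw [c1, integral_add I_nfh I_fq, integral_neg]
    rw [split, Complex.add_re, Complex.neg_re, E1, Complex.neg_re, e_gg, neg_neg, e_fq]
  have R2b : (∫ x : ℝ, star (f x) * k x).re ≤ (N0 + K2)/2 := by
    rw [ho_int_re I_fk]
    have hmeas : Integrable (fun x : ℝ => (star (f x) * k x).re) volume := by
      simpa using I_fk.re
    have hpt2 : ∀ x : ℝ, (star (f x) * k x).re ≤ (‖f x‖^2 + ‖k x‖^2)/2 := fun x => by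
      have := ho_re5 (f x) (k x)
      nlinarith [sq_nonneg (‖f x‖ - ‖k x‖)]
    calc (∫ x : ℝ, (star (f x) * k x).re)
        ≤ ∫ x : ℝ, (‖f x‖^2 + ‖k x‖^2)/2 := by
          refine integral_mono (by simpa using I_fk.re) ((J_f2.add J_k2).div_const 2)
            (fun x => ?_)
          simpa using hpt2 x
      _ = (N0 + K2)/2 := by rw [integral_div, integral_add J_f2 J_k2]
  have R2 : N0 ≤ K2 := by
    have := hfk_re ▸ R2b
    linarith
  -- R3 : expansion of K2
  have e_hq : (∫ x : ℝ, star (h x) * q x).re = N0 - G2 := by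
    have comm : ∫ x : ℝ, star (h x) * q x = ∫ x : ℝ, q x * star (h x) :=
      integral_congr_ae (ae_of_all _ fun x => mul_comm _ _)
    have splitE2 : ∫ x : ℝ, (2*(x:ℂ)*f x + (x:ℂ)^2*g x) * star (g x)
        = (∫ x : ℝ, (2*(x:ℂ)*f x) * star (g x)) + ∫ x : ℝ, ((x:ℂ)^2*g x) * star (g x) := by
      rw [← integral_add I_a I_b]
      exact integral_congr_ae (ae_of_all _ fun x => by ring)
    have re_a : (∫ x : ℝ, (2*(x:ℂ)*f x) * star (g x)).re = -N0 := by
      rw [ho_int_re I_a, ← A1]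
      refine integral_congr_ae (ae_of_all _ fun x => ?_)
      show ((2*(x:ℂ)*f x) * star (g x)).re = x * (2 * (star (g x) * f x).re)
      exact ho_re6 x (f x) (g x)
    have re_b : (∫ x : ℝ, ((x:ℂ)^2*g x) * star (g x)).re = G2 := by
      rw [ho_int_re I_b]
      refine integral_congr_ae (ae_of_all _ fun x => ?_)
      show (((x:ℂ)^2*g x) * star (g x)).re = x^2 * ‖g x‖^2
      rw [show ((x:ℂ)^2*g x) * star (g x) = star (g x) * ((x:ℂ)^2 * g x) from by ring,
        ho_re4, ho_re1]
    rw [comm, E2, Complex.neg_re, splitE2, Complex.add_re, re_a, re_b]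
    ring
  have e_k2 : K2 = H2 + Q2 - 2*(N0 - G2) := by
    have s2 : K2 = ∫ x : ℝ, (‖h x‖^2 + ‖q x‖^2 - 2*(star (h x) * q x).re) := by
      rw [hK2]
      exact integral_congr_ae (ae_of_all _ fun x => hk2 x)
    have Jsum : Integrable (fun x : ℝ => ‖h x‖^2 + ‖q x‖^2) volume := J_h2.add J_q2
    have J2re : Integrable (fun x : ℝ => 2*(star (h x) * q x).re) volume :=
      I_shq_re.const_mul 2
    have s3 : ∫ x : ℝ, (‖h x‖^2 + ‖q x‖^2 - 2*(star (h x) * q x).re)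
        = H2 + Q2 - 2 * ∫ x : ℝ, (star (h x) * q x).re := by
      rw [integral_sub Jsum J2re, integral_add J_h2 J_q2, integral_const_mul]
    have s4 : ∫ x : ℝ, (star (h x) * q x).re = N0 - G2 := by
      rw [← e_hq]
      exact (ho_int_re I_shq).symm
    rw [s2, s3, s4]
  have hH2nn : 0 ≤ H2 := integral_nonneg (fun x => sq_nonneg _)
  have hG2nn : 0 ≤ G2 := integral_nonneg (fun x => by positivity)
  have hK2nn : 0 ≤ K2 := integral_nonneg (fun x => sq_nonneg _)
  have hQ5 : Q2 ≤ 5 * K2 := by linarith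
  -- conclude
  have mq : MemLp q 2 volume :=
    (memLp_two_iff_integrable_sq_norm cq.aestronglyMeasurable).2 J_q2
  have mk : MemLp k 2 volume :=
    (memLp_two_iff_integrable_sq_norm ck.aestronglyMeasurable).2 J_k2
  rw [mq.eLpNorm_eq_integral_rpow_norm two_ne_zero ENNReal.ofNat_ne_top,
    mk.eLpNorm_eq_integral_rpow_norm two_ne_zero ENNReal.ofNat_ne_top,
    ← ENNReal.ofReal_mul (Real.sqrt_nonneg 5)]
  apply ENNReal.ofReal_le_ofReal
  have h2t : (2:ENNReal).toReal = 2 := by simp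
  have hconvq : (∫ a : ℝ, ‖q a‖ ^ (2:ENNReal).toReal) = Q2 := by
    rw [hQ2]
    refine integral_congr_ae (ae_of_all _ fun a => ?_)
    show ‖q a‖ ^ (2:ENNReal).toReal = ‖q a‖ ^ 2
    rw [h2t, Real.rpow_two]
  have hconvk : (∫ a : ℝ, ‖k a‖ ^ (2:ENNReal).toReal) = K2 := by
    rw [hK2]
    refine integral_congr_ae (ae_of_all _ fun a => ?_)
    show ‖k a‖ ^ (2:ENNReal).toReal = ‖k a‖ ^ 2
    rw [h2t, Real.rpow_two]
  rw [hconvq, hconvk, h2t]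
  have hinv : ∀ y : ℝ, 0 ≤ y → y ^ ((2:ℝ)⁻¹) = Real.sqrt y := fun y hy => by
    rw [Real.sqrt_eq_rpow, one_div]
  rw [hinv Q2 (hQ2 ▸ integral_nonneg fun x => sq_nonneg _),
    hinv K2 hK2nn, ← Real.sqrt_mul (by norm_num : (0:ℝ) ≤ 5)]
  exact Real.sqrt_le_sqrt hQ5
end

section
/- Define ρ̃ on (ℝ^{d₁}×ℝ^{d₂})² by ρ̃(x,y) = |x'-y'| + |x''-y''|/(|x'|+|y'|) if |x''-y''|^{1/2} ≤ |x'|+|y'|, and ρ̃(x,y) = |x'-y'| + |x''-y''|^{1/2} otherwise. Then the Lebesgue measure of the ball B(x,r) = {y : ρ̃(x,y) < r} is comparable (with constants depending only on d₁,d₂) to r^{d₁+d₂} · max{r, |x'|}^{d₂}, for all x and all r > 0. -/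
open MeasureTheory

/-- The Grushin quasi-distance on `ℝ^{d₁} × ℝ^{d₂}`. -/
noncomputable def grushinDist {d₁ d₂ : ℕ}
    (x y : EuclideanSpace ℝ (Fin d₁) × EuclideanSpace ℝ (Fin d₂)) : ℝ :=
  if Real.sqrt ‖x.2 - y.2‖ ≤ ‖x.1‖ + ‖y.1‖ then
    ‖x.1 - y.1‖ + ‖x.2 - y.2‖ / (‖x.1‖ + ‖y.1‖)
  else
    ‖x.1 - y.1‖ + Real.sqrt ‖x.2 - y.2‖

set_option maxHeartbeats 1000000 in
/-- The Lebesgue volume of Grushin balls: `|B(x,r)| ∼ r^{d₁+d₂} max{r,|x'|}^{d₂}`. -/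
theorem stmt5 (d₁ d₂ : ℕ) (hd₁ : 0 < d₁) (hd₂ : 0 < d₂) :
    ∃ c C : ℝ, 0 < c ∧ 0 < C ∧
      ∀ (x : EuclideanSpace ℝ (Fin d₁) × EuclideanSpace ℝ (Fin d₂)) (r : ℝ), 0 < r →
        c * (r ^ (d₁ + d₂) * max r ‖x.1‖ ^ d₂) ≤
            (volume {y | grushinDist x y < r}).toReal ∧
          (volume {y | grushinDist x y < r}).toReal ≤
            C * (r ^ (d₁ + d₂) * max r ‖x.1‖ ^ d₂) := by
  classical
  haveI : Nonempty (Fin d₁) := Fin.pos_iff_nonempty.mp hd₁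
  haveI : Nonempty (Fin d₂) := Fin.pos_iff_nonempty.mp hd₂
  set V₁ := volume (Metric.ball (0 : EuclideanSpace ℝ (Fin d₁)) 1) with hV₁def
  set V₂ := volume (Metric.ball (0 : EuclideanSpace ℝ (Fin d₂)) 1) with hV₂def
  have hV₁pos : 0 < V₁ := Metric.measure_ball_pos _ _ one_pos
  have hV₂pos : 0 < V₂ := Metric.measure_ball_pos _ _ one_pos
  have hV₁lt : V₁ ≠ ⊤ := measure_ball_lt_top.ne
  have hV₂lt : V₂ ≠ ⊤ := measure_ball_lt_top.ne
  set v₁ := V₁.toReal with hv₁def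
  set v₂ := V₂.toReal with hv₂def
  have hv₁ : 0 < v₁ := ENNReal.toReal_pos hV₁pos.ne' hV₁lt
  have hv₂ : 0 < v₂ := ENNReal.toReal_pos hV₂pos.ne' hV₂lt
  refine ⟨v₁ * v₂ * ((1/2) ^ d₁ * (1/4) ^ d₂), v₁ * v₂ * 3 ^ d₂,
    by positivity, by positivity, ?_⟩
  intro x r hr
  set M := max r ‖x.1‖ with hMdef
  have hMr : r ≤ M := le_max_left _ _
  have hMx : ‖x.1‖ ≤ M := le_max_right _ _
  have hM0 : 0 < M := lt_of_lt_of_le hr hMr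
  have hx1 : (0:ℝ) ≤ ‖x.1‖ := norm_nonneg _
  -- auxiliary: volume of a Euclidean ball
  have hvol : ∀ (n : ℕ) (_ : 0 < n) (z : EuclideanSpace ℝ (Fin n)) (t : ℝ), 0 ≤ t →
      volume (Metric.ball z t) =
        ENNReal.ofReal (t ^ n) * volume (Metric.ball (0 : EuclideanSpace ℝ (Fin n)) 1) := by
    intro n hn z t ht
    haveI : Nonempty (Fin n) := Fin.pos_iff_nonempty.mp hn
    rw [Measure.addHaar_ball _ _ ht, finrank_euclideanSpace, Fintype.card_fin]
  -- inner box
  have hsub1 : (Metric.ball x.1 (r/2)) ×ˢ (Metric.ball x.2 (r*M/4)) ⊆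
      {y | grushinDist x y < r} := by
    rintro y ⟨hy1, hy2⟩
    rw [Metric.mem_ball, dist_eq_norm, norm_sub_rev] at hy1 hy2
    have h2n : (0:ℝ) ≤ ‖x.2 - y.2‖ := norm_nonneg _
    have hy1n : (0:ℝ) ≤ ‖y.1‖ := norm_nonneg _
    have hsq2 : Real.sqrt ‖x.2 - y.2‖ ^ 2 = ‖x.2 - y.2‖ := Real.sq_sqrt h2n
    have hsqn : (0:ℝ) ≤ Real.sqrt ‖x.2 - y.2‖ := Real.sqrt_nonneg _
    simp only [Set.mem_setOf_eq, grushinDist]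
    split_ifs with h
    · have hkey : ‖x.2 - y.2‖ / (‖x.1‖ + ‖y.1‖) ≤ r / 2 := by
        rcases eq_or_lt_of_le (by positivity : (0:ℝ) ≤ ‖x.1‖ + ‖y.1‖) with hs | hs
        · rw [← hs, div_zero]; linarith
        · rw [div_le_iff₀ hs]
          have hms : Real.sqrt ‖x.2 - y.2‖ * Real.sqrt ‖x.2 - y.2‖ = ‖x.2 - y.2‖ :=
            Real.mul_self_sqrt h2n
          rcases le_total ‖x.1‖ r with hc | hc
          · have hM' : M = r := max_eq_left hc
            have hsl : Real.sqrt ‖x.2 - y.2‖ < r / 2 :=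
              (Real.sqrt_lt' (by linarith)).mpr (by rw [hM'] at hy2; nlinarith)
            have e1 : Real.sqrt ‖x.2 - y.2‖ * Real.sqrt ‖x.2 - y.2‖ ≤
                (‖x.1‖ + ‖y.1‖) * Real.sqrt ‖x.2 - y.2‖ :=
              mul_le_mul_of_nonneg_right h hsqn
            have e2 : (‖x.1‖ + ‖y.1‖) * Real.sqrt ‖x.2 - y.2‖ ≤ (‖x.1‖ + ‖y.1‖) * (r / 2) :=
              mul_le_mul_of_nonneg_left hsl.le hs.le
            linarith
          · have hM' : M = ‖x.1‖ := max_eq_right hc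
            have e1 : r * ‖x.1‖ ≤ r * (‖x.1‖ + ‖y.1‖) :=
              mul_le_mul_of_nonneg_left (by linarith) hr.le
            rw [hM'] at hy2
            linarith
      linarith
    · push_neg at h
      have hms : Real.sqrt ‖x.2 - y.2‖ * Real.sqrt ‖x.2 - y.2‖ = ‖x.2 - y.2‖ :=
        Real.mul_self_sqrt h2n
      rcases le_total ‖x.1‖ r with hc | hc
      · have hM' : M = r := max_eq_left hc
        rw [hM'] at hy2
        have h2 : Real.sqrt ‖x.2 - y.2‖ < r/2 :=
          (Real.sqrt_lt' (by linarith)).mpr (by nlinarith)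
        linarith
      · exfalso
        have hM' : M = ‖x.1‖ := max_eq_right hc
        rw [hM'] at hy2
        have hx_lt : ‖x.1‖ < Real.sqrt ‖x.2 - y.2‖ := by linarith
        have e1 : ‖x.1‖ * ‖x.1‖ < Real.sqrt ‖x.2 - y.2‖ * Real.sqrt ‖x.2 - y.2‖ :=
          mul_self_lt_mul_self hx1 hx_lt
        have e2 : r * ‖x.1‖ ≤ ‖x.1‖ * ‖x.1‖ :=
          mul_le_mul_of_nonneg_right hc hx1
        linarith
  -- outer box
  have hsub2 : {y | grushinDist x y < r} ⊆
      (Metric.ball x.1 r) ×ˢ (Metric.ball x.2 (3*(r*M))) := by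
    intro y hy
    simp only [Set.mem_setOf_eq, grushinDist] at hy
    have h2n : (0:ℝ) ≤ ‖x.2 - y.2‖ := norm_nonneg _
    have h1n : (0:ℝ) ≤ ‖x.1 - y.1‖ := norm_nonneg _
    have hy1n : (0:ℝ) ≤ ‖y.1‖ := norm_nonneg _
    have hsq2 : Real.sqrt ‖x.2 - y.2‖ ^ 2 = ‖x.2 - y.2‖ := Real.sq_sqrt h2n
    have hsqn : (0:ℝ) ≤ Real.sqrt ‖x.2 - y.2‖ := Real.sqrt_nonneg _
    have htri : ‖y.1‖ - ‖x.1‖ ≤ ‖x.1 - y.1‖ := by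
      have := norm_sub_norm_le y.1 x.1
      rwa [norm_sub_rev] at this
    constructor <;> rw [Metric.mem_ball, dist_eq_norm, norm_sub_rev]
    · split_ifs at hy with h
      · have : (0:ℝ) ≤ ‖x.2 - y.2‖ / (‖x.1‖ + ‖y.1‖) := by positivity
        linarith
      · linarith
    · have hms : Real.sqrt ‖x.2 - y.2‖ * Real.sqrt ‖x.2 - y.2‖ = ‖x.2 - y.2‖ :=
        Real.mul_self_sqrt h2n
      have hrM : 0 < r * M := mul_pos hr hM0
      split_ifs at hy with h
      · rcases eq_or_lt_of_le (by positivity : (0:ℝ) ≤ ‖x.1‖ + ‖y.1‖) with hs | hs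
        · have h0 : Real.sqrt ‖x.2 - y.2‖ = 0 := le_antisymm (by linarith) hsqn
          rw [h0, mul_zero] at hms
          linarith
        · have hd1 : ‖x.1 - y.1‖ < r := by
            have : (0:ℝ) ≤ ‖x.2 - y.2‖ / (‖x.1‖ + ‖y.1‖) := by positivity
            linarith
          have hlt : ‖x.2 - y.2‖ < r * (‖x.1‖ + ‖y.1‖) := by
            have : ‖x.2 - y.2‖ / (‖x.1‖ + ‖y.1‖) < r := by linarith
            rwa [div_lt_iff₀ hs] at this
          have hs3 : ‖x.1‖ + ‖y.1‖ ≤ 3 * M := by linarith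
          have e1 : r * (‖x.1‖ + ‖y.1‖) ≤ r * (3 * M) :=
            mul_le_mul_of_nonneg_left hs3 hr.le
          linarith
      · have hsr : Real.sqrt ‖x.2 - y.2‖ < r := by linarith
        have e1 : Real.sqrt ‖x.2 - y.2‖ * Real.sqrt ‖x.2 - y.2‖ < r * r :=
          mul_self_lt_mul_self hsqn hsr
        have e2 : r * r ≤ r * M := mul_le_mul_of_nonneg_left hMr hr.le
        linarith
  -- volumes of boxes
  have houter : volume ((Metric.ball x.1 r) ×ˢ (Metric.ball x.2 (3*(r*M)))) =
      ENNReal.ofReal (r ^ d₁) * V₁ * (ENNReal.ofReal ((3*(r*M)) ^ d₂) * V₂) := by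
    rw [Measure.volume_eq_prod, Measure.prod_prod, hvol d₁ hd₁ x.1 r hr.le,
      hvol d₂ hd₂ x.2 _ (by positivity)]
  have hinner : volume ((Metric.ball x.1 (r/2)) ×ˢ (Metric.ball x.2 (r*M/4))) =
      ENNReal.ofReal ((r/2) ^ d₁) * V₁ * (ENNReal.ofReal ((r*M/4) ^ d₂) * V₂) := by
    rw [Measure.volume_eq_prod, Measure.prod_prod, hvol d₁ hd₁ x.1 _ (by positivity),
      hvol d₂ hd₂ x.2 _ (by positivity)]
  have houter_ne : volume ((Metric.ball x.1 r) ×ˢ (Metric.ball x.2 (3*(r*M)))) ≠ ⊤ := by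
    rw [houter]
    exact ENNReal.mul_ne_top (ENNReal.mul_ne_top ENNReal.ofReal_ne_top hV₁lt)
      (ENNReal.mul_ne_top ENNReal.ofReal_ne_top hV₂lt)
  have hB_ne : volume {y | grushinDist x y < r} ≠ ⊤ :=
    ((measure_mono hsub2).trans_lt houter_ne.lt_top).ne
  have hmono1 : ((r/2) ^ d₁ * v₁ * ((r*M/4) ^ d₂ * v₂)) ≤
      (volume {y | grushinDist x y < r}).toReal := by
    have := ENNReal.toReal_mono hB_ne (measure_mono hsub1)
    rw [hinner, ENNReal.toReal_mul, ENNReal.toReal_mul, ENNReal.toReal_mul,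
      ENNReal.toReal_ofReal (by positivity), ENNReal.toReal_ofReal (by positivity)] at this
    exact this
  have hmono2 : (volume {y | grushinDist x y < r}).toReal ≤
      (r ^ d₁ * v₁ * ((3*(r*M)) ^ d₂ * v₂)) := by
    have := ENNReal.toReal_mono houter_ne (measure_mono hsub2)
    rw [houter, ENNReal.toReal_mul, ENNReal.toReal_mul, ENNReal.toReal_mul,
      ENNReal.toReal_ofReal (by positivity), ENNReal.toReal_ofReal (by positivity)] at this
    exact this
  constructor
  · refine le_trans (le_of_eq ?_) hmono1
    rw [pow_add, div_pow, div_pow, div_pow, div_pow, mul_pow, one_pow, one_pow]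
    field_simp
  · refine le_trans hmono2 (le_of_eq ?_)
    rw [pow_add, mul_pow, mul_pow]
    ring
end
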